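/- Let G be a finite subgroup of U(2), Z = G ∩ {scalar matrices}, and let H₁, …, H_r be a complete set of representatives for the G-conjugacy classes of maximal abelian subgroups of G. Then the class equation |G| = |Z| + Σ_{i=1}^{r} [G : N_G(H_i)]·(|H_i| − |Z|) holds. -/

import Mathlib

open Matrix

local notation "M2" => Matrix (Fin 2) (Fin 2) ℂ
local notation "U2" => Matrix.unitaryGroup (Fin 2) ℂ

lemma scalar_iff (x : M2) : (∃ c : ℂ, x = c • 1) ↔ (x 0 1 = 0 ∧ x 1 0 = 0 ∧ x 0 0 = x 1 1) := by
  constructor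
  · rintro ⟨c, rfl⟩
    simp [Matrix.smul_apply, Matrix.one_apply]
  · rintro ⟨h1, h2, h3⟩
    refine ⟨x 0 0, ?_⟩
    ext i j
    fin_cases i <;> fin_cases j <;> simp [Matrix.one_apply, h1, h2, ← h3]

lemma decomp (x y : M2) (hx : ¬ ∃ c : ℂ, x = c • 1) (h : x * y = y * x) :
    ∃ α β : ℂ, y = α • 1 + β • x := by
  have e : ∀ i j, (x * y) i j = (y * x) i j := fun i j => by rw [h]
  have E1 := e 0 0
  have E2 := e 0 1
  have E3 := e 1 0
  have E4 := e 1 1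
  simp only [Matrix.mul_apply, Fin.sum_univ_two] at E1 E2 E3 E4
  rw [scalar_iff] at hx
  push_neg at hx
  by_cases hb : x 0 1 ≠ 0
  · refine ⟨y 0 0 - (y 0 1 / x 0 1) * x 0 0, y 0 1 / x 0 1, ?_⟩
    ext i j
    fin_cases i <;> fin_cases j <;>
      simp only [Matrix.add_apply, Matrix.smul_apply, Matrix.one_apply, smul_eq_mul,
        Fin.zero_eta, Fin.mk_one, Fin.isValue, mul_one, mul_zero, zero_ne_one, one_ne_zero,
        ite_true, ite_false, reduceIte]
    · ring
    · field_simp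
      ring
    · field_simp
      linear_combination E1
    · field_simp
      linear_combination E2
  push_neg at hb
  by_cases hc : x 1 0 ≠ 0
  · refine ⟨y 0 0 - (y 1 0 / x 1 0) * x 0 0, y 1 0 / x 1 0, ?_⟩
    ext i j
    fin_cases i <;> fin_cases j <;>
      simp only [Matrix.add_apply, Matrix.smul_apply, Matrix.one_apply, smul_eq_mul,
        Fin.zero_eta, Fin.mk_one, Fin.isValue, mul_one, mul_zero, zero_ne_one, one_ne_zero,
        ite_true, ite_false, reduceIte]
    · ring
    · field_simp
      linear_combination E4
    · field_simp
      ring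
    · field_simp
      linear_combination -E3
  push_neg at hc
  have had : x 0 0 - x 1 1 ≠ 0 := sub_ne_zero.2 (hx hb hc)
  have hq : y 0 1 = 0 := by
    have h0 : y 0 1 * (x 0 0 - x 1 1) = 0 := by
      linear_combination E2 - y 1 1 * hb + y 0 0 * hb
    exact (mul_eq_zero.1 h0).resolve_right had
  have hr : y 1 0 = 0 := by
    have h0 : y 1 0 * (x 0 0 - x 1 1) = 0 := by
      linear_combination -E3 - y 1 1 * hc + y 0 0 * hc
    exact (mul_eq_zero.1 h0).resolve_right had
  refine ⟨y 0 0 - ((y 0 0 - y 1 1) / (x 0 0 - x 1 1)) * x 0 0,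
    (y 0 0 - y 1 1) / (x 0 0 - x 1 1), ?_⟩
  ext i j
  fin_cases i <;> fin_cases j <;>
    simp only [Matrix.add_apply, Matrix.smul_apply, Matrix.one_apply, smul_eq_mul,
      Fin.zero_eta, Fin.mk_one, Fin.isValue, mul_one, mul_zero, zero_ne_one, one_ne_zero,
      ite_true, ite_false, reduceIte, hb, hc, hq, hr]
  · ring
  · ring
  · ring
  · field_simp
    ring

/-- Scalar unitaries are central. -/
lemma central_of_scalar (z u : U2) (hz : ∃ c : ℂ, (z : M2) = c • 1) : z * u = u * z := by
  obtain ⟨c, hc⟩ := hz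
  refine Subtype.ext ?_
  show (z : M2) * u = (u : M2) * z
  rw [hc, smul_one_mul, mul_smul_one]

lemma commute3 (x y z : U2) (hx : ¬ ∃ c : ℂ, (x : M2) = c • 1)
    (hxy : x * y = y * x) (hxz : x * z = z * x) : y * z = z * y := by
  have hxy' : (x : M2) * y = y * x := congrArg Subtype.val hxy
  have hxz' : (x : M2) * z = z * x := congrArg Subtype.val hxz
  obtain ⟨α, β, hy⟩ := decomp (x : M2) (y : M2) hx hxy'
  have hcz : Commute (x : M2) (z : M2) := hxz'
  refine Subtype.ext ?_
  show (y : M2) * z = (z : M2) * y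
  rw [hy]
  exact (((Commute.one_left (z : M2)).smul_left α).add_left (hcz.smul_left β)).eq

/-- The centralizer of a nonscalar element of `G`, intersected with `G`. -/
noncomputable def Cx (G : Subgroup U2) (x : U2) : Subgroup U2 :=
  Subgroup.centralizer {x} ⊓ G

lemma Cx_comm (G : Subgroup U2) (x : U2) (hx : ¬ ∃ c : ℂ, (x : M2) = c • 1) :
    IsMulCommutative (Cx G x) := by
  constructor
  constructor
  rintro ⟨a, ha⟩ ⟨b, hb⟩
  have ha' := (Subgroup.mem_centralizer_iff.1 ha.1) x rfl
  have hb' := (Subgroup.mem_centralizer_iff.1 hb.1) x rfl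
  exact Subtype.ext (commute3 x a b hx ha' hb')

lemma mem_Cx_self (G : Subgroup U2) (x : U2) (hxG : x ∈ G) : x ∈ Cx G x :=
  ⟨Subgroup.mem_centralizer_iff.2 (by rintro h rfl; rfl), hxG⟩

/-- `MaxAbelianIn H G`: `H` is a maximal abelian subgroup of `G` (both viewed as
subgroups of U(2)). -/
def MaxAbelianIn (H G : Subgroup (Matrix.unitaryGroup (Fin 2) ℂ)) : Prop :=
  H ≤ G ∧ IsMulCommutative H ∧
    ∀ H' : Subgroup (Matrix.unitaryGroup (Fin 2) ℂ),
      H' ≤ G → IsMulCommutative H' → H ≤ H' → H' = H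

lemma comm_le_centralizer {M : Subgroup U2} (hM : IsMulCommutative M) {x : U2} (hx : x ∈ M) :
    M ≤ Subgroup.centralizer {x} := by
  intro a ha
  rw [Subgroup.mem_centralizer_iff]
  rintro h rfl
  exact congrArg Subtype.val (hM.is_comm.comm ⟨h, hx⟩ ⟨a, ha⟩)

lemma Cx_max (G : Subgroup U2) (x : U2) (hxG : x ∈ G) (hx : ¬ ∃ c : ℂ, (x : M2) = c • 1) :
    MaxAbelianIn (Cx G x) G := by
  refine ⟨inf_le_right, Cx_comm G x hx, fun H' hle hcomm hsub => ?_⟩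
  have hxH' : x ∈ H' := hsub (mem_Cx_self G x hxG)
  exact le_antisymm (le_inf (comm_le_centralizer hcomm hxH') hle) hsub

lemma eq_Cx_of_max {G M : Subgroup U2} (hM : MaxAbelianIn M G) {x : U2} (hxM : x ∈ M)
    (hx : ¬ ∃ c : ℂ, (x : M2) = c • 1) : M = Cx G x := by
  obtain ⟨hle, hcomm, hmax⟩ := hM
  have h1 : M ≤ Cx G x := le_inf (comm_le_centralizer hcomm hxM) hle
  exact (hmax _ inf_le_right (Cx_comm G x hx) h1).symm

/-- every maximal abelian subgroup contains all scalars of G -/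
lemma scalar_mem_max {G M : Subgroup U2} (hM : MaxAbelianIn M G) {z : U2} (hzG : z ∈ G)
    (hz : ∃ c : ℂ, (z : M2) = c • 1) : z ∈ M := by
  by_cases hns : ∃ x ∈ M, ¬ ∃ c : ℂ, (x : M2) = c • 1
  · obtain ⟨x, hxM, hx⟩ := hns
    rw [eq_Cx_of_max hM hxM hx]
    exact ⟨Subgroup.mem_centralizer_iff.2 (by rintro h rfl; exact (central_of_scalar z h hz).symm),
      hzG⟩
  · push_neg at hns
    by_cases hGs : ∃ x ∈ G, ¬ ∃ c : ℂ, (x : M2) = c • 1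
    · obtain ⟨x, hxG, hx⟩ := hGs
      exfalso
      have h1 : M ≤ Cx G x := le_inf
        (fun a ha => Subgroup.mem_centralizer_iff.2
          (by rintro h rfl; exact central_of_scalar a h (hns a ha) |>.symm))
        hM.1
      have := hM.2.2 (Cx G x) inf_le_right (Cx_comm G x hx) h1
      exact hx (hns x (this ▸ mem_Cx_self G x hxG))
    · push_neg at hGs
      have hGcomm : IsMulCommutative G := by
        constructor; constructor
        rintro ⟨a, ha⟩ ⟨b, hb⟩
        exact Subtype.ext (central_of_scalar a b (hGs a ha))
      have : G = M := hM.2.2 G le_rfl hGcomm hM.1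
      exact this ▸ hzG

open Pointwise

/-- `ConjIn G H₁ H₂`: the subgroup `H₂` is conjugate to `H₁` by an element of `G`,
i.e. `H₂ = g H₁ g⁻¹` for some `g ∈ G`. -/
def ConjIn (G H₁ H₂ : Subgroup (Matrix.unitaryGroup (Fin 2) ℂ)) : Prop :=
  ∃ g ∈ G, ∀ x, x ∈ H₂ ↔ g⁻¹ * x * g ∈ H₁

lemma mem_conj_smul (g x : U2) (M : Subgroup U2) :
    x ∈ MulAut.conj g • M ↔ g⁻¹ * x * g ∈ M := by
  rw [Subgroup.mem_pointwise_smul_iff_inv_smul_mem]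
  simp [MulAut.smul_def, mul_assoc]

lemma conjIn_iff_smul (G H₁ H₂ : Subgroup U2) :
    ConjIn G H₁ H₂ ↔ ∃ g ∈ G, MulAut.conj g • H₁ = H₂ := by
  constructor
  · rintro ⟨g, hg, h⟩
    exact ⟨g, hg, SetLike.ext fun x => (mem_conj_smul g x H₁).trans (h x).symm⟩
  · rintro ⟨g, hg, rfl⟩
    exact ⟨g, hg, fun x => mem_conj_smul g x H₁⟩

lemma conj_smul_eq_self_iff (g : U2) (M : Subgroup U2) :
    MulAut.conj g • M = M ↔ g ∈ Subgroup.normalizer (M : Set U2) := by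
  rw [Subgroup.mem_normalizer_iff'']
  constructor
  · intro h x
    conv_lhs => rw [← h, mem_conj_smul]
  · intro h
    ext x
    rw [mem_conj_smul, ← h]

lemma smul_le_G {G : Subgroup U2} {g : U2} (hg : g ∈ G) {M : Subgroup U2} (h : M ≤ G) :
    MulAut.conj g • M ≤ G := by
  intro x hx
  rw [mem_conj_smul] at hx
  have : g * (g⁻¹ * x * g) * g⁻¹ ∈ G := G.mul_mem (G.mul_mem hg (h hx)) (G.inv_mem hg)
  convert this using 1
  group

lemma smul_isComm (a : MulAut U2) {M : Subgroup U2} (h : IsMulCommutative M) :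
    IsMulCommutative (a • M : Subgroup U2) := by
  constructor; constructor
  intro x y
  let e := Subgroup.equivSMul a M
  have hc := h.is_comm.comm (e.symm x) (e.symm y)
  calc x * y = e (e.symm x) * e (e.symm y) := by rw [e.apply_symm_apply, e.apply_symm_apply]
    _ = e (e.symm x * e.symm y) := (_root_.map_mul e _ _).symm
    _ = e (e.symm y * e.symm x) := by rw [hc]
    _ = y * x := by rw [_root_.map_mul, e.apply_symm_apply, e.apply_symm_apply]

lemma max_smul {G M : Subgroup U2} (hM : MaxAbelianIn M G) {g : U2} (hg : g ∈ G) :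
    MaxAbelianIn (MulAut.conj g • M) G := by
  refine ⟨smul_le_G hg hM.1, smul_isComm _ hM.2.1, fun H' hle hcomm hsub => ?_⟩
  have h1 : MulAut.conj g⁻¹ • H' ≤ G := smul_le_G (G.inv_mem hg) hle
  have h2 : IsMulCommutative (MulAut.conj g⁻¹ • H' : Subgroup U2) := smul_isComm _ hcomm
  have h3 : M ≤ MulAut.conj g⁻¹ • H' := by
    intro x hx
    rw [mem_conj_smul]
    apply hsub
    rw [mem_conj_smul]
    convert hx using 1
    group
  have h4 := hM.2.2 _ h1 h2 h3
  have := congrArg (fun K => MulAut.conj g • K) h4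
  simpa only [map_inv, smul_inv_smul] using this

lemma conjIn_refl (G M : Subgroup U2) : ConjIn G M M :=
  (conjIn_iff_smul G M M).2 ⟨1, G.one_mem, by simp⟩

lemma conjIn_symm {G A B : Subgroup U2} (h : ConjIn G A B) : ConjIn G B A := by
  rw [conjIn_iff_smul] at h ⊢
  obtain ⟨g, hg, rfl⟩ := h
  exact ⟨g⁻¹, G.inv_mem hg, by rw [map_inv, inv_smul_smul]⟩

lemma conjIn_trans {G A B C : Subgroup U2} (h1 : ConjIn G A B) (h2 : ConjIn G B C) :
    ConjIn G A C := by
  rw [conjIn_iff_smul] at h1 h2 ⊢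
  obtain ⟨g1, hg1, rfl⟩ := h1
  obtain ⟨g2, hg2, rfl⟩ := h2
  exact ⟨g2 * g1, G.mul_mem hg2 hg1, by rw [_root_.map_mul, mul_smul]⟩

lemma card_conjIn {G A B : Subgroup U2} (h : ConjIn G A B) : Nat.card B = Nat.card A := by
  rw [conjIn_iff_smul] at h
  obtain ⟨g, hg, rfl⟩ := h
  exact (Nat.card_congr (Subgroup.equivSMul (MulAut.conj g) A).toEquiv).symm

set_option synthInstance.maxHeartbeats 1000000 in
lemma card_orbit (G K : Subgroup U2) :
    Nat.card {M : Subgroup U2 | ConjIn G K M} = (Subgroup.normalizer (K : Set U2) ⊓ G).relIndex G := by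
  letI : MulAction ↥G (Subgroup U2) :=
    MulAction.compHom _ ((MulAut.conj (G := U2)).comp G.subtype)
  have hsmul : ∀ (g : ↥G) (M : Subgroup U2), g • M = MulAut.conj (g : U2) • M := fun g M =>
    rfl
  have horb : MulAction.orbit ↥G K = {M : Subgroup U2 | ConjIn G K M} := by
    ext M
    rw [MulAction.mem_orbit_iff]
    constructor
    · rintro ⟨g, rfl⟩
      exact (conjIn_iff_smul G K _).2 ⟨g, g.2, (hsmul g K).symm⟩
    · intro h
      obtain ⟨g, hg, hEq⟩ := (conjIn_iff_smul G K M).1 h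
      exact ⟨⟨g, hg⟩, by rw [hsmul]; exact hEq⟩
  have hstab : MulAction.stabilizer ↥G K = (Subgroup.normalizer (K : Set U2) ⊓ G).subgroupOf G := by
    ext g
    rw [MulAction.mem_stabilizer_iff, Subgroup.mem_subgroupOf, Subgroup.mem_inf, hsmul,
      conj_smul_eq_self_iff]
    exact ⟨fun h => ⟨h, g.2⟩, fun h => h.1⟩
  rw [← horb, Subgroup.relIndex, ← hstab, Subgroup.index]
  exact Nat.card_congr (MulAction.orbitEquivQuotientStabilizer ↥G K)

open Set in
theorem class_equation_U2
    (G : Subgroup (Matrix.unitaryGroup (Fin 2) ℂ)) (hG : Finite G)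
    (Z : Set (Matrix.unitaryGroup (Fin 2) ℂ))
    (hZ : Z = {g | g ∈ G ∧ ∃ c : ℂ,
      (g : Matrix (Fin 2) (Fin 2) ℂ) = c • (1 : Matrix (Fin 2) (Fin 2) ℂ)})
    (r : ℕ) (H : Fin r → Subgroup (Matrix.unitaryGroup (Fin 2) ℂ))
    (hmax : ∀ i, MaxAbelianIn (H i) G)
    (hdisj : ∀ i j, i ≠ j → ¬ ConjIn G (H i) (H j))
    (hcomplete : ∀ H' , MaxAbelianIn H' G → ∃ i, ConjIn G (H i) H') :
    Nat.card G =
      Nat.card Z +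
        ∑ i : Fin r,
          ((Subgroup.normalizer ((H i : Set (Matrix.unitaryGroup (Fin 2) ℂ))) ⊓ G).relIndex G) * (Nat.card (H i) - Nat.card Z) := by
  classical
  haveI := hG
  have hGs : (G : Set U2).Finite := Set.toFinite _
  have hZsub : Z ⊆ (G : Set U2) := by rw [hZ]; exact fun z hz => hz.1
  have hZfin : Z.Finite := hGs.subset hZsub
  set D : Set U2 := (G : Set U2) \ Z with hDdef
  have hDfin : D.Finite := hGs.diff
  have hDns : ∀ x ∈ D, x ∈ G ∧ ¬ ∃ c : ℂ, (x : M2) = c • (1 : M2) := by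
    rintro x ⟨hxG, hxZ⟩
    exact ⟨hxG, fun hsc => hxZ (by rw [hZ]; exact ⟨hxG, hsc⟩)⟩
  -- the (finite) set of maximal abelian subgroups of G
  have hMfin : {M : Subgroup U2 | MaxAbelianIn M G}.Finite := by
    refine Set.Finite.of_finite_image (hGs.finite_subsets.subset ?_)
      (SetLike.coe_injective.injOn)
    rintro S ⟨M, hM, rfl⟩
    exact fun x hx => hM.1 hx
  -- step 1 : split off Z
  have h1 : Nat.card G = Nat.card Z + D.ncard := by
    have e1 : Nat.card G = (G : Set U2).ncard := Nat.card_coe_set_eq _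
    have e2 : Nat.card Z = Z.ncard := Nat.card_coe_set_eq _
    rw [e1, e2, ← Set.union_diff_cancel hZsub,
      Set.ncard_union_eq Set.disjoint_sdiff_right hZfin (hGs.diff)]
  -- step 2 : partition D by the maximal abelian subgroups
  have hmapsto : ∀ x ∈ hDfin.toFinset, Cx G x ∈ hMfin.toFinset := by
    intro x hx
    rw [Set.Finite.mem_toFinset] at hx ⊢
    obtain ⟨hxG, hns⟩ := hDns x hx
    exact Cx_max G x hxG hns
  have h2 : D.ncard = ∑ M ∈ hMfin.toFinset, ((M : Set U2) \ Z).ncard := by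
    rw [Set.ncard_eq_toFinset_card _ hDfin,
      Finset.card_eq_sum_card_fiberwise hmapsto]
    refine Finset.sum_congr rfl fun M hM => ?_
    rw [Set.Finite.mem_toFinset] at hM
    have hfinMZ : ((M : Set U2) \ Z).Finite := (hGs.subset (fun x hx => hM.1 hx)).diff
    rw [Set.ncard_eq_toFinset_card _ hfinMZ]
    congr 1
    ext x
    rw [Finset.mem_filter, Set.Finite.mem_toFinset, Set.Finite.mem_toFinset]
    constructor
    · rintro ⟨hxD, hcx⟩
      obtain ⟨hxG, hns⟩ := hDns x hxD
      exact ⟨hcx ▸ mem_Cx_self G x hxG, hxD.2⟩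
    · rintro ⟨hxM, hxZ⟩
      have hxG : x ∈ G := hM.1 hxM
      have hxD : x ∈ D := ⟨hxG, hxZ⟩
      obtain ⟨-, hns⟩ := hDns x hxD
      exact ⟨hxD, (eq_Cx_of_max hM hxM hns).symm⟩
  -- step 3 : each block has size |M| - |Z|
  have h3 : ∀ M ∈ hMfin.toFinset, ((M : Set U2) \ Z).ncard = Nat.card M - Nat.card Z := by
    intro M hM
    rw [Set.Finite.mem_toFinset] at hM
    have hZM : Z ⊆ (M : Set U2) := by
      intro z hz
      rw [hZ] at hz
      exact scalar_mem_max hM hz.1 hz.2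
    rw [Set.ncard_diff hZM hZfin, ← Nat.card_coe_set_eq, ← Nat.card_coe_set_eq]
    rfl
  rcases Nat.eq_zero_or_pos r with hr | hr
  · -- no maximal abelian subgroups at all : G = Z
    subst hr
    have hD0 : D = ∅ := by
      ext x
      simp only [Set.mem_empty_iff_false, iff_false]
      intro hx
      obtain ⟨hxG, hns⟩ := hDns x hx
      obtain ⟨i, -⟩ := hcomplete _ (Cx_max G x hxG hns)
      exact i.elim0
    rw [h1, hD0, Set.ncard_empty]
    simp
  -- classifier of conjugacy classes
  have i0 : Fin r := ⟨0, hr⟩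
  set ι : Subgroup U2 → Fin r := fun M =>
    if h : ∃ i, ConjIn G (H i) M then h.choose else i0 with hιdef
  have hι : ∀ M : Subgroup U2, MaxAbelianIn M G → ConjIn G (H (ι M)) M := by
    intro M hM
    have h := hcomplete M hM
    simp only [hιdef, dif_pos h]
    exact h.choose_spec
  have huni : ∀ (i : Fin r) (M : Subgroup U2), MaxAbelianIn M G → ConjIn G (H i) M →
      ι M = i := by
    intro i M hM hconj
    by_contra hne
    exact hdisj (ι M) i hne (conjIn_trans (hι M hM) (conjIn_symm hconj))
  -- the orbits
  have horbfin : ∀ i : Fin r, {M : Subgroup U2 | ConjIn G (H i) M}.Finite := by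
    intro i
    refine hMfin.subset fun M hM => ?_
    obtain ⟨g, hg, rfl⟩ := (conjIn_iff_smul G (H i) M).1 hM
    exact max_smul (hmax i) hg
  have h5 : ∀ i : Fin r, hMfin.toFinset.filter (fun M => ι M = i) = (horbfin i).toFinset := by
    intro i
    ext M
    rw [Finset.mem_filter, Set.Finite.mem_toFinset, Set.Finite.mem_toFinset]
    constructor
    · rintro ⟨hM, rfl⟩
      exact hι M hM
    · intro hconj
      have hMmax : MaxAbelianIn M G := by
        obtain ⟨g, hg, rfl⟩ := (conjIn_iff_smul G (H i) M).1 hconj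
        exact max_smul (hmax i) hg
      exact ⟨hMmax, huni i M hMmax hconj⟩
  -- regroup the sum by conjugacy class
  have h4 : ∑ M ∈ hMfin.toFinset, (Nat.card M - Nat.card Z) =
      ∑ i : Fin r, ∑ M ∈ hMfin.toFinset.filter (fun M => ι M = i),
        (Nat.card M - Nat.card Z) :=
    (Finset.sum_fiberwise_of_maps_to (fun M _ => Finset.mem_univ _) _).symm
  have h6 : ∀ i : Fin r, ∑ M ∈ (horbfin i).toFinset, (Nat.card M - Nat.card Z) =
      ((Subgroup.normalizer ((H i : Set U2)) ⊓ G).relIndex G) * (Nat.card (H i) - Nat.card Z) := by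
    intro i
    have hconst : ∀ M ∈ (horbfin i).toFinset,
        (Nat.card M - Nat.card Z) = Nat.card (H i) - Nat.card Z := by
      intro M hM
      rw [Set.Finite.mem_toFinset] at hM
      rw [card_conjIn hM]
    rw [Finset.sum_congr rfl hconst, Finset.sum_const, smul_eq_mul]
    congr 1
    rw [← Set.ncard_eq_toFinset_card _ (horbfin i), ← Nat.card_coe_set_eq]
    exact card_orbit G (H i)
  calc Nat.card G = Nat.card Z + D.ncard := h1
    _ = Nat.card Z + ∑ M ∈ hMfin.toFinset, ((M : Set U2) \ Z).ncard := by rw [h2]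
    _ = Nat.card Z + ∑ M ∈ hMfin.toFinset, (Nat.card M - Nat.card Z) := by
        rw [Finset.sum_congr rfl h3]
    _ = Nat.card Z + ∑ i : Fin r, ∑ M ∈ hMfin.toFinset.filter (fun M => ι M = i),
          (Nat.card M - Nat.card Z) := by rw [h4]
    _ = Nat.card Z + ∑ i : Fin r,
          ((Subgroup.normalizer ((H i : Set U2)) ⊓ G).relIndex G) * (Nat.card (H i) - Nat.card Z) := by
        congr 1
        refine Finset.sum_congr rfl fun i _ => ?_
        rw [h5 i, h6 i]
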